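/- (Lemma 8(i)) Let p ∈ (0,1), let Σ be positive definite, and let Y ⊆ ℝ^m be nonempty and such that v_k(y) ≠ 0 for some y ∈ Y and some k ∈ {1,…,K}. Then χ₁⁻¹(p) ≤ μ(p, Y; N_Σ, Σ) ≤ χ_d⁻¹(p). -/

import Mathlib

open MeasureTheory ProbabilityTheory Matrix
open scoped ENNReal Pointwise

/-- The ellipsoid `U_Σ = {u : uᵀ Σ⁻¹ u ≤ 1}`. -/
def USet {d : ℕ} (Sg : Matrix (Fin d) (Fin d) ℝ) : Set (Fin d → ℝ) :=
  {u | u ⬝ᵥ (Sg⁻¹ *ᵥ u) ≤ 1}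

/-- `r_k(x; Σ) = max_{u ∈ U_Σ} g_k(x, u)` where `g_k(x, θ) = θᵀ v_k(x)`. -/
noncomputable def rk {d m K : ℕ} (v : Fin K → (Fin m → ℝ) → (Fin d → ℝ))
    (k : Fin K) (x : Fin m → ℝ) (Sg : Matrix (Fin d) (Fin d) ℝ) : ℝ :=
  sSup ((fun u => u ⬝ᵥ v k x) '' USet Sg)

/-- `S(λ, Y; Σ)`, the set of parameter errors that are uniformly small over `Y`. -/
noncomputable def SErr {d m K : ℕ} (v : Fin K → (Fin m → ℝ) → (Fin d → ℝ))
    (lam : ℝ) (Y : Set (Fin m → ℝ)) (Sg : Matrix (Fin d) (Fin d) ℝ) : Set (Fin d → ℝ) :=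
  {Δ | ∀ k, ∀ y ∈ Y, |Δ ⬝ᵥ v k y| ≤ lam * rk v k y Sg}

/-- Feasibility for the robust optimization problem with scale `lam`, center `θ`, shape `Σ`. -/
def Feasible {d m K : ℕ} (X : Set (Fin m → ℝ)) (v : Fin K → (Fin m → ℝ) → (Fin d → ℝ))
    (lam : ℝ) (θ : Fin d → ℝ) (Sg : Matrix (Fin d) (Fin d) ℝ) (x : Fin m → ℝ) : Prop :=
  x ∈ X ∧ ∀ k, ∀ u ∈ USet Sg, 0 ≤ (θ + lam • u) ⬝ᵥ v k x

/-- Optimal solution of the robust optimization problem. -/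
def IsOptimal {d m K : ℕ} (X : Set (Fin m → ℝ)) (f : (Fin m → ℝ) → ℝ)
    (v : Fin K → (Fin m → ℝ) → (Fin d → ℝ))
    (lam : ℝ) (θ : Fin d → ℝ) (Sg : Matrix (Fin d) (Fin d) ℝ) (x : Fin m → ℝ) : Prop :=
  Feasible X v lam θ Sg x ∧ ∀ y, Feasible X v lam θ Sg y → f x ≤ f y

open Classical in
/-- The true objective `f*`, which is `∞` when a true constraint is violated. -/
noncomputable def fStar {d m K : ℕ} (f : (Fin m → ℝ) → ℝ)
    (v : Fin K → (Fin m → ℝ) → (Fin d → ℝ)) (θs : Fin d → ℝ) (x : Fin m → ℝ) : EReal :=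
  if ∀ k, 0 ≤ θs ⬝ᵥ v k x then (f x : EReal) else ⊤

/-- The standard Gaussian measure on `ℝ^d`. -/
noncomputable def stdGaussian (d : ℕ) : Measure (Fin d → ℝ) :=
  Measure.pi fun _ => gaussianReal 0 1

open Classical in
/-- The positive semidefinite square root (junk value `0` off the psd cone). -/
noncomputable def matSqrt {d : ℕ} (A : Matrix (Fin d) (Fin d) ℝ) : Matrix (Fin d) (Fin d) ℝ :=
  if h : A.PosSemidef then
    h.1.eigenvectorUnitary.1 * diagonal ((↑) ∘ (√·) ∘ h.1.eigenvalues) *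
      (star h.1.eigenvectorUnitary : Matrix (Fin d) (Fin d) ℝ)
  else 0

/-- The centered Gaussian measure on `ℝ^d` with covariance `A`. -/
noncomputable def gaussOf {d : ℕ} (A : Matrix (Fin d) (Fin d) ℝ) : Measure (Fin d → ℝ) :=
  (stdGaussian d).map (fun z => matSqrt A *ᵥ z)

/-- The Euclidean norm on `Fin d → ℝ`. -/
noncomputable def euclNorm {d : ℕ} (z : Fin d → ℝ) : ℝ := Real.sqrt (∑ i, z i ^ 2)

/-- Quantile function of the chi distribution with `d` degrees of freedom. -/
noncomputable def chiQuantile (d : ℕ) (p : ℝ) : ℝ :=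
  sInf {t : ℝ | 0 ≤ t ∧ p ≤ (stdGaussian d {z | euclNorm z ≤ t}).toReal}

/-- The minimum spatial uniform bound `μ(p, Y; P, Σ)` (`⊤` when infeasible, `0` for `p ≤ 0`). -/
noncomputable def muB {d m K : ℕ} (v : Fin K → (Fin m → ℝ) → (Fin d → ℝ)) (p : ℝ)
    (Y : Set (Fin m → ℝ)) (P : Measure (Fin d → ℝ)) (Sg : Matrix (Fin d) (Fin d) ℝ) : ℝ≥0∞ :=
  ⨅ (μ : ℝ) (_ : 0 ≤ μ ∧ ENNReal.ofReal p ≤ P (SErr v μ Y Sg)), ENNReal.ofReal μ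

noncomputable def EuclideanSpace.measurableEquiv (ι : Type*) [Fintype ι] :
    EuclideanSpace ℝ ι ≃ᵐ (ι → ℝ) :=
  (MeasurableEquiv.toLp 2 (ι → ℝ)).symm

theorem EuclideanSpace.volume_preserving_measurableEquiv (ι : Type*) [Fintype ι] :
    MeasurePreserving (EuclideanSpace.measurableEquiv ι) :=
  EuclideanSpace.volume_preserving_symm_measurableEquiv_toLp ι

lemma lintegral_pi_prod : ∀ {n : ℕ} (f : Fin n → ℝ → ℝ≥0∞), (∀ i, Measurable (f i)) →
    ∫⁻ z, ∏ i, f i (z i) ∂(Measure.pi fun _ : Fin n => (volume : Measure ℝ)) =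
      ∏ i, ∫⁻ x, f i x := by
  intro n
  induction n with
  | zero =>
    intro f hf
    simp [lintegral_const, Measure.pi_univ]
  | succ n ih =>
    intro f hf
    have hmp := measurePreserving_piFinSuccAbove (fun _ : Fin (n+1) => (volume : Measure ℝ)) 0
    set e := MeasurableEquiv.piFinSuccAbove (fun _ : Fin (n+1) => ℝ) 0 with he
    have key : ∫⁻ z, ∏ i, f i (z i) ∂(Measure.pi fun _ : Fin (n+1) => (volume : Measure ℝ))
        = ∫⁻ y, ∏ i, f i (e.symm y i)
            ∂((volume : Measure ℝ).prod (Measure.pi fun _ : Fin n => (volume : Measure ℝ))) := by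
      rw [← hmp.map_eq, lintegral_map_equiv]
      simp
    rw [key]
    have hprod : ∀ y : ℝ × (Fin n → ℝ),
        (∏ i, f i (e.symm y i)) = f 0 y.1 * ∏ j, f (Fin.succ j) (y.2 j) := by
      intro y
      rw [Fin.prod_univ_succ]
      have h0 : e.symm y 0 = y.1 := by
        simp [he, MeasurableEquiv.piFinSuccAbove]
      have hs : ∀ j : Fin n, e.symm y (Fin.succ j) = y.2 j := by
        intro j
        simp [he, MeasurableEquiv.piFinSuccAbove]
      rw [h0]
      simp only [hs]
    simp_rw [hprod]
    have hg : Measurable (fun w : Fin n → ℝ => ∏ j, f (Fin.succ j) (w j)) :=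
      Finset.measurable_prod Finset.univ fun j _ =>
        (hf (Fin.succ j)).comp (measurable_pi_apply j)
    rw [lintegral_prod_mul (f := f 0) (g := fun w : Fin n → ℝ => ∏ j, f (Fin.succ j) (w j))
      ((hf 0).aemeasurable) hg.aemeasurable]
    rw [ih (fun j => f (Fin.succ j)) (fun j => hf _), Fin.prod_univ_succ]

instance stdGaussian_prob (d : ℕ) : IsProbabilityMeasure (stdGaussian d) := by
  unfold _root_.stdGaussian; infer_instance

lemma stdGaussian_eq (d : ℕ) :
    stdGaussian d = (volume : Measure (Fin d → ℝ)).withDensity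
      (fun z => ∏ i, gaussianPDF 0 1 (z i)) := by
  unfold _root_.stdGaussian
  refine Measure.pi_eq (μ := fun _ : Fin d => gaussianReal 0 1) fun s hs => ?_
  rw [withDensity_apply _ (MeasurableSet.univ_pi hs)]
  have hind : ∀ z : Fin d → ℝ, Set.indicator (Set.pi Set.univ s)
      (fun z => ∏ i, gaussianPDF 0 1 (z i)) z
      = ∏ i, Set.indicator (s i) (gaussianPDF 0 1) (z i) := by
    intro z
    by_cases hz : z ∈ Set.pi Set.univ s
    · rw [Set.indicator_of_mem hz]
      exact Finset.prod_congr rfl fun i _ =>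
        (Set.indicator_of_mem (hz i (Set.mem_univ i)) _).symm
    · rw [Set.indicator_of_notMem hz]
      rw [Set.mem_pi] at hz
      push_neg at hz
      obtain ⟨i, -, hi⟩ := hz
      exact (Finset.prod_eq_zero (Finset.mem_univ i)
        (by rw [Set.indicator_of_notMem hi])).symm
  rw [← lintegral_indicator (MeasurableSet.univ_pi hs)
    (f := fun z : Fin d → ℝ => ∏ i, gaussianPDF 0 1 (z i))]

  simp_rw [hind]
  rw [volume_pi, lintegral_pi_prod _ (fun i => (measurable_gaussianPDF 0 1).indicator (hs i))]
  exact Finset.prod_congr rfl fun i _ => by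
    rw [lintegral_indicator (hs i), ← withDensity_apply _ (hs i),
      ← gaussianReal_of_var_ne_zero 0 one_ne_zero]

lemma map_withDensity_mp {d : ℕ} {T : (Fin d → ℝ) → (Fin d → ℝ)}
    (hT : MeasurePreserving T (volume : Measure (Fin d → ℝ)) volume)
    (G : (Fin d → ℝ) → ℝ≥0∞) (hG : Measurable G) (hGT : ∀ z, G (T z) = G z) :
    ((volume : Measure (Fin d → ℝ)).withDensity G).map T = volume.withDensity G := by
  ext s hs
  rw [Measure.map_apply hT.measurable hs, withDensity_apply _ (hT.measurable hs),
    withDensity_apply _ hs]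
  calc ∫⁻ x in T ⁻¹' s, G x ∂volume = ∫⁻ x in T ⁻¹' s, G (T x) ∂volume := by
        exact setLIntegral_congr_fun (hT.measurable hs)
          (fun x _ => (hGT x).symm)
    _ = ∫⁻ y in s, G y ∂(volume.map T) := (setLIntegral_map hs hG hT.measurable).symm
    _ = ∫⁻ y in s, G y ∂volume := by rw [hT.map_eq]

lemma prod_gaussianPDF {d : ℕ} (z : Fin d → ℝ) :
    ∏ i, gaussianPDF 0 1 (z i)
      = ENNReal.ofReal ((Real.sqrt (2 * Real.pi))⁻¹ ^ d * Real.exp (-(∑ i, z i ^ 2) / 2)) := by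
  simp_rw [gaussianPDF, gaussianPDFReal]
  rw [← ENNReal.ofReal_prod_of_nonneg (fun i _ => by positivity)]
  congr 1
  rw [Finset.prod_mul_distrib, Finset.prod_const]
  congr 1
  · simp
  · rw [← Real.exp_sum]
    congr 1
    rw [← Finset.sum_div, ← Finset.sum_neg_distrib]
    simp

lemma sum_sq_eq_normsq {d : ℕ} (x : EuclideanSpace ℝ (Fin d)) :
    ∑ i, x i ^ 2 = ‖x‖ ^ 2 := by
  rw [EuclideanSpace.norm_eq, Real.sq_sqrt (by positivity)]
  exact Finset.sum_congr rfl fun i _ => by simp [Real.norm_eq_abs, sq_abs]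

lemma stdGaussian_map_isometry {d : ℕ}
    (L : EuclideanSpace ℝ (Fin d) ≃ₗᵢ[ℝ] EuclideanSpace ℝ (Fin d)) :
    (stdGaussian d).map
      (fun z => (EuclideanSpace.measurableEquiv (Fin d))
        (L ((EuclideanSpace.measurableEquiv (Fin d)).symm z))) = stdGaussian d := by
  set me := EuclideanSpace.measurableEquiv (Fin d)
  have hmp : MeasurePreserving (fun z => me (L (me.symm z)))
      (volume : Measure (Fin d → ℝ)) volume := by
    have h1 := EuclideanSpace.volume_preserving_measurableEquiv (Fin d)
    exact h1.comp (L.measurePreserving.comp h1.symm)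
  rw [stdGaussian_eq]
  refine map_withDensity_mp hmp _ ?_ ?_
  · exact Finset.measurable_prod _ fun i _ =>
      (measurable_gaussianPDF 0 1).comp (measurable_pi_apply i)
  · intro z
    rw [prod_gaussianPDF, prod_gaussianPDF]
    have h2 : ∑ i, (me (L (me.symm z))) i ^ 2 = ∑ i, z i ^ 2 := by
      have ha : ∑ i, (me (L (me.symm z))) i ^ 2 = ‖L (me.symm z)‖ ^ 2 :=
        sum_sq_eq_normsq (L (me.symm z))
      have hb : ∑ i, z i ^ 2 = ‖(me.symm z : EuclideanSpace ℝ (Fin d))‖ ^ 2 :=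
        sum_sq_eq_normsq (me.symm z)
      rw [ha, hb, L.norm_map]
    rw [h2]

lemma stdGaussian_map_eval {d : ℕ} (i0 : Fin d) :
    (stdGaussian d).map (fun z => z i0) = gaussianReal 0 1 := by
  ext s hs
  rw [Measure.map_apply (measurable_pi_apply i0) hs]
  have : (fun z : Fin d → ℝ => z i0) ⁻¹' s
      = Set.pi Set.univ (Function.update (fun _ => Set.univ) i0 s) := by
    exact Set.eval_preimage
  rw [this]
  unfold _root_.stdGaussian
  rw [Measure.pi_pi]
  refine Finset.prod_eq_single_of_mem i0 (Finset.mem_univ _) (fun j _ hj => ?_) |>.trans ?_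
  · rw [Function.update_of_ne hj]
    exact measure_univ
  · rw [Function.update_self]

lemma stdGaussian_map_dot {d : ℕ} (hd : 0 < d) (e : Fin d → ℝ) (he : ∑ i, e i ^ 2 = 1) :
    (stdGaussian d).map (fun z => z ⬝ᵥ e) = gaussianReal 0 1 := by
  set me := EuclideanSpace.measurableEquiv (Fin d)
  set i0 : Fin d := ⟨0, hd⟩
  set ee : EuclideanSpace ℝ (Fin d) := me.symm e with hee
  set b : EuclideanSpace ℝ (Fin d) := EuclideanSpace.single i0 (1:ℝ) with hb
  have hnorm : ‖b‖ = ‖ee‖ := by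
    rw [EuclideanSpace.norm_single]
    have : ‖ee‖ ^ 2 = 1 := by rw [← sum_sq_eq_normsq ee]; exact he
    have h1 : ‖ee‖ = 1 := by nlinarith [norm_nonneg ee]
    simp [h1]
  set L : EuclideanSpace ℝ (Fin d) ≃ₗᵢ[ℝ] EuclideanSpace ℝ (Fin d) :=
    Submodule.reflection (ℝ ∙ (b - ee))ᗮ with hL
  have hLb : L b = ee := Submodule.reflection_sub hnorm
  have hfun : (fun z : Fin d → ℝ => z ⬝ᵥ e)
      = (fun w : Fin d → ℝ => w i0) ∘ (fun z => me (L.symm (me.symm z))) := by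
    funext z
    have h1 : z ⬝ᵥ e = (inner ℝ (me.symm z) ee : ℝ) := by
      rw [PiLp.inner_apply]
      simp only [RCLike.inner_apply, starRingEnd_apply, star_trivial]
      exact Finset.sum_congr rfl fun i _ => mul_comm _ _
    have h2 : (inner ℝ (me.symm z) ee : ℝ) = (inner ℝ (L.symm (me.symm z)) b : ℝ) := by
      rw [← hLb, ← L.inner_map_map (L.symm (me.symm z)) b, L.apply_symm_apply]
    have h3 : (inner ℝ (L.symm (me.symm z)) b : ℝ) = (L.symm (me.symm z)) i0 := by
      rw [hb, EuclideanSpace.inner_single_right]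
      simp
    simp only [Function.comp_apply]
    rw [h1, h2, h3]
    rfl
  rw [hfun, ← Measure.map_map (measurable_pi_apply i0)]
  · rw [stdGaussian_map_isometry L.symm, stdGaussian_map_eval]
  · exact me.measurable.comp (L.symm.continuous.measurable.comp me.symm.measurable)

lemma euclNorm_nonneg {d : ℕ} (z : Fin d → ℝ) : 0 ≤ euclNorm z := Real.sqrt_nonneg _

lemma euclNorm_eq_norm {d : ℕ} (z : Fin d → ℝ) :
    euclNorm z = ‖((EuclideanSpace.measurableEquiv (Fin d)).symm z : EuclideanSpace ℝ (Fin d))‖ := by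
  rw [euclNorm]
  have : ∑ i, z i ^ 2
      = ‖((EuclideanSpace.measurableEquiv (Fin d)).symm z : EuclideanSpace ℝ (Fin d))‖ ^ 2 :=
    sum_sq_eq_normsq _
  rw [this, Real.sqrt_sq (norm_nonneg _)]

lemma dotProduct_eq_inner {d : ℕ} (x y : Fin d → ℝ) :
    x ⬝ᵥ y = (inner ℝ ((EuclideanSpace.measurableEquiv (Fin d)).symm x)
      ((EuclideanSpace.measurableEquiv (Fin d)).symm y) : ℝ) := by
  rw [PiLp.inner_apply]
  simp only [RCLike.inner_apply, starRingEnd_apply, star_trivial]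
  exact Finset.sum_congr rfl fun i _ => mul_comm _ _

lemma abs_dotProduct_le {d : ℕ} (x y : Fin d → ℝ) :
    |x ⬝ᵥ y| ≤ euclNorm x * euclNorm y := by
  rw [dotProduct_eq_inner, euclNorm_eq_norm, euclNorm_eq_norm]
  exact abs_real_inner_le_norm _ _

lemma dotProduct_self_eq {d : ℕ} (x : Fin d → ℝ) : x ⬝ᵥ x = euclNorm x ^ 2 := by
  rw [euclNorm, Real.sq_sqrt (by positivity)]
  exact Finset.sum_congr rfl fun i _ => sq (x i) ▸ (sq (x i)).symm ▸ by ring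

lemma euclNorm_eq_zero_iff {d : ℕ} {x : Fin d → ℝ} : euclNorm x = 0 ↔ x = 0 := by
  rw [euclNorm_eq_norm, norm_eq_zero]
  constructor
  · intro h; funext i
    have : ((EuclideanSpace.measurableEquiv (Fin d)).symm x : EuclideanSpace ℝ (Fin d)) i = 0 := by
      rw [h]; rfl
    exact this
  · intro h; rw [h]; rfl

lemma measurable_dot {d : ℕ} (w : Fin d → ℝ) : Measurable (fun z : Fin d → ℝ => z ⬝ᵥ w) := by
  unfold dotProduct
  exact Finset.measurable_sum _ fun i _ => (measurable_pi_apply i).mul_const _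

lemma measurable_mulVec {d : ℕ} (A : Matrix (Fin d) (Fin d) ℝ) :
    Measurable (fun z : Fin d → ℝ => A *ᵥ z) := by
  refine measurable_pi_lambda _ fun i => ?_
  show Measurable fun z : Fin d → ℝ => (A i) ⬝ᵥ z
  unfold dotProduct
  exact Finset.measurable_sum _ fun j _ => (measurable_pi_apply j).const_mul _

section MatrixFacts
variable {d : ℕ} {Sg : Matrix (Fin d) (Fin d) ℝ} (hSg : Sg.PosDef)

lemma matSqrt_mul_self (hSg : Sg.PosDef) : matSqrt Sg * matSqrt Sg = Sg := by
  rw [matSqrt, dif_pos hSg.posSemidef]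
  have hU : (star hSg.posSemidef.1.eigenvectorUnitary : Matrix (Fin d) (Fin d) ℝ) *
      hSg.posSemidef.1.eigenvectorUnitary.1 = 1 := Unitary.star_mul_self_of_mem hSg.posSemidef.1.eigenvectorUnitary.2
  conv_rhs => rw [hSg.posSemidef.1.spectral_theorem, Unitary.conjStarAlgAut_apply]
  simp only [Matrix.mul_assoc]
  rw [← Matrix.mul_assoc (star _ : Matrix (Fin d) (Fin d) ℝ) _ , hU, Matrix.one_mul,
    ← Matrix.mul_assoc (diagonal _), diagonal_mul_diagonal]
  congr 3
  funext i
  have := hSg.posSemidef.eigenvalues_nonneg i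
  simp [Real.mul_self_sqrt this]

lemma matSqrt_transpose (hSg : Sg.PosDef) : (matSqrt Sg)ᵀ = matSqrt Sg := by
  rw [matSqrt, dif_pos hSg.posSemidef, ← Matrix.conjTranspose_eq_transpose_of_trivial]
  simp only [conjTranspose_mul, diagonal_conjTranspose, star_eq_conjTranspose,
    conjTranspose_conjTranspose, Matrix.mul_assoc, star_trivial]

lemma matSqrt_det_isUnit (hSg : Sg.PosDef) : IsUnit (matSqrt Sg).det := by
  have h : (matSqrt Sg).det * (matSqrt Sg).det = Sg.det := by
    rw [← Matrix.det_mul, matSqrt_mul_self hSg]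
  have hd := hSg.det_pos
  refine isUnit_iff_ne_zero.mpr fun h0 => ?_
  rw [h0, mul_zero] at h
  exact hd.ne (h ▸ rfl)

lemma Sg_inv_eq (hSg : Sg.PosDef) : Sg⁻¹ = (matSqrt Sg)⁻¹ * (matSqrt Sg)⁻¹ := by
  conv_lhs => rw [← matSqrt_mul_self hSg]
  rw [Matrix.mul_inv_rev]

lemma vecMul_matSqrt (hSg : Sg.PosDef) (x : Fin d → ℝ) :
    x ᵥ* matSqrt Sg = matSqrt Sg *ᵥ x := by
  conv_lhs => rw [← matSqrt_transpose hSg]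
  exact Matrix.vecMul_transpose _ _

lemma vecMul_matSqrt_inv (hSg : Sg.PosDef) (x : Fin d → ℝ) :
    x ᵥ* (matSqrt Sg)⁻¹ = (matSqrt Sg)⁻¹ *ᵥ x := by
  conv_lhs => rw [← matSqrt_transpose hSg, ← Matrix.transpose_nonsing_inv]
  exact Matrix.vecMul_transpose _ _

lemma mulVec_dot_symm (hSg : Sg.PosDef) (z w : Fin d → ℝ) :
    (matSqrt Sg *ᵥ z) ⬝ᵥ w = z ⬝ᵥ (matSqrt Sg *ᵥ w) := by
  rw [dotProduct_comm, Matrix.dotProduct_mulVec, vecMul_matSqrt hSg,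
    dotProduct_comm]

lemma quadform_eq (hSg : Sg.PosDef) (u : Fin d → ℝ) :
    u ⬝ᵥ (Sg⁻¹ *ᵥ u) = ((matSqrt Sg)⁻¹ *ᵥ u) ⬝ᵥ ((matSqrt Sg)⁻¹ *ᵥ u) := by
  rw [Sg_inv_eq hSg, ← Matrix.mulVec_mulVec, Matrix.dotProduct_mulVec, vecMul_matSqrt_inv hSg]

lemma sSup_dot_USet (hSg : Sg.PosDef) (w : Fin d → ℝ) :
    sSup ((fun u => u ⬝ᵥ w) '' USet Sg) = euclNorm (matSqrt Sg *ᵥ w) := by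
  set A := matSqrt Sg with hA
  set σ := euclNorm (A *ᵥ w) with hσ
  have hdet := matSqrt_det_isUnit hSg
  have hSgdet : IsUnit Sg.det := isUnit_iff_ne_zero.mpr hSg.det_pos.ne'
  have hub : ∀ r ∈ (fun u => u ⬝ᵥ w) '' USet Sg, r ≤ σ := by
    rintro r ⟨u, hu, rfl⟩
    have h1 : u ⬝ᵥ w = (A⁻¹ *ᵥ u) ⬝ᵥ (A *ᵥ w) := by
      rw [Matrix.dotProduct_mulVec, vecMul_matSqrt hSg, Matrix.mulVec_mulVec,
        Matrix.mul_nonsing_inv _ hdet, Matrix.one_mulVec]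
    have h2 : euclNorm (A⁻¹ *ᵥ u) ≤ 1 := by
      have hq : euclNorm (A⁻¹ *ᵥ u) ^ 2 ≤ 1 := by
        rw [← dotProduct_self_eq, ← quadform_eq hSg]
        exact hu
      nlinarith [euclNorm_nonneg (A⁻¹ *ᵥ u)]
    calc u ⬝ᵥ w ≤ |(A⁻¹ *ᵥ u) ⬝ᵥ (A *ᵥ w)| := h1 ▸ le_abs_self _
      _ ≤ euclNorm (A⁻¹ *ᵥ u) * σ := abs_dotProduct_le _ _
      _ ≤ 1 * σ := mul_le_mul_of_nonneg_right h2 (euclNorm_nonneg _)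
      _ = σ := one_mul σ
  have hne : ((fun u => u ⬝ᵥ w) '' USet Sg).Nonempty := by
    refine ⟨0, 0, ?_, zero_dotProduct w⟩
    show (0 : Fin d → ℝ) ⬝ᵥ (Sg⁻¹ *ᵥ 0) ≤ 1
    rw [zero_dotProduct]
    norm_num
  have hbdd : BddAbove ((fun u => u ⬝ᵥ w) '' USet Sg) := ⟨σ, hub⟩
  refine le_antisymm (csSup_le hne hub) ?_
  rcases eq_or_lt_of_le (euclNorm_nonneg (A *ᵥ w)) with h0 | hpos
  · have hz : σ = 0 := h0.symm
    rw [hz]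
    refine le_csSup hbdd ⟨0, ?_, zero_dotProduct w⟩
    show (0 : Fin d → ℝ) ⬝ᵥ (Sg⁻¹ *ᵥ 0) ≤ 1
    rw [zero_dotProduct]
    norm_num
  · set u : Fin d → ℝ := σ⁻¹ • (A *ᵥ (A *ᵥ w)) with hu
    have hAAw : (A *ᵥ (A *ᵥ w)) ⬝ᵥ w = σ ^ 2 := by
      rw [mulVec_dot_symm hSg, dotProduct_self_eq]
    have hSgInvAAw : Sg⁻¹ *ᵥ (A *ᵥ (A *ᵥ w)) = w := by
      rw [Matrix.mulVec_mulVec, Matrix.mulVec_mulVec, Matrix.mul_assoc,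
        matSqrt_mul_self hSg, Matrix.nonsing_inv_mul _ hSgdet, Matrix.one_mulVec]
    have humem : u ∈ USet Sg := by
      show u ⬝ᵥ (Sg⁻¹ *ᵥ u) ≤ 1
      rw [hu, Matrix.mulVec_smul, smul_dotProduct, dotProduct_smul,
        hSgInvAAw, hAAw]
      rw [smul_eq_mul, smul_eq_mul]
      rw [sq]
      field_simp
      exact (div_self hpos.ne').le
    have hdot : u ⬝ᵥ w = σ := by
      rw [hu, smul_dotProduct, hAAw, smul_eq_mul, sq]
      field_simp
    exact le_csSup hbdd ⟨u, humem, hdot⟩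

end MatrixFacts

lemma measurable_euclNorm {d : ℕ} : Measurable (euclNorm : (Fin d → ℝ) → ℝ) := by
  apply Real.continuous_sqrt.measurable.comp
  exact Finset.measurable_sum _ fun i _ => (measurable_pi_apply i).pow_const 2

lemma measurableSet_chiBall {d : ℕ} (t : ℝ) :
    MeasurableSet {z : Fin d → ℝ | euclNorm z ≤ t} :=
  measurableSet_le measurable_euclNorm measurable_const

lemma chiSet_upward {d : ℕ} {p a b : ℝ}
    (ha : a ∈ {t : ℝ | 0 ≤ t ∧ p ≤ (stdGaussian d {z | euclNorm z ≤ t}).toReal})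
    (hab : a ≤ b) :
    b ∈ {t : ℝ | 0 ≤ t ∧ p ≤ (stdGaussian d {z | euclNorm z ≤ t}).toReal} := by
  refine ⟨ha.1.trans hab, ha.2.trans ?_⟩
  exact ENNReal.toReal_mono (measure_ne_top _ _)
    (measure_mono fun z hz => le_trans hz hab)

lemma chiSet_nonempty {d : ℕ} {p : ℝ} (hp0 : 0 < p) (hp1 : p < 1) :
    ∃ t : ℝ, t ∈ {t : ℝ | 0 ≤ t ∧ p ≤ (stdGaussian d {z | euclNorm z ≤ t}).toReal} := by
  have hmono : Monotone (fun n : ℕ => {z : Fin d → ℝ | euclNorm z ≤ (n : ℝ)}) := by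
    intro n m hnm z hz
    simp only [Set.mem_setOf_eq] at hz ⊢
    exact le_trans hz (by exact_mod_cast hnm)
  have hU : (⋃ n : ℕ, {z : Fin d → ℝ | euclNorm z ≤ (n : ℝ)}) = Set.univ := by
    ext z
    simp only [Set.mem_iUnion, Set.mem_univ, iff_true]
    obtain ⟨n, hn⟩ := exists_nat_ge (euclNorm z)
    exact ⟨n, hn⟩
  have htend := tendsto_measure_iUnion_atTop (μ := stdGaussian d) hmono
  rw [hU, measure_univ] at htend
  have hlt : ENNReal.ofReal p < 1 := by
    rw [← ENNReal.ofReal_one]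
    exact ENNReal.ofReal_lt_ofReal_iff_of_nonneg hp0.le |>.mpr hp1
  obtain ⟨n, hn⟩ := (htend.eventually (eventually_gt_nhds hlt)).exists
  refine ⟨n, Nat.cast_nonneg n, ?_⟩
  have h2 := ENNReal.toReal_mono (measure_ne_top _ _) hn.le
  rwa [ENNReal.toReal_ofReal hp0.le] at h2

lemma chiQuantile_mem {d : ℕ} {p : ℝ} (hp0 : 0 < p) (hp1 : p < 1) :
    0 ≤ chiQuantile d p ∧
      p ≤ (stdGaussian d {z | euclNorm z ≤ chiQuantile d p}).toReal := by
  set S := {t : ℝ | 0 ≤ t ∧ p ≤ (stdGaussian d {z | euclNorm z ≤ t}).toReal} with hS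
  have hne : S.Nonempty := chiSet_nonempty hp0 hp1
  have hbdd : BddBelow S := ⟨0, fun t ht => ht.1⟩
  have hq0 : 0 ≤ chiQuantile d p := le_csInf hne fun t ht => ht.1
  refine ⟨hq0, ?_⟩
  set q := chiQuantile d p with hqdef
  have hCmem : ∀ n : ℕ, q + 1 / (n + 1) ∈ S := by
    intro n
    have hpos : (0:ℝ) < 1 / (n + 1) := by positivity
    have : sInf S < q + 1 / (n + 1) := by
      rw [hqdef, chiQuantile, ← hS]
      have : sInf S ≤ q := le_of_eq (by rw [hqdef, chiQuantile, ← hS])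
      linarith
    obtain ⟨a, haS, halt⟩ := (csInf_lt_iff hbdd hne).mp this
    exact chiSet_upward haS halt.le
  have hInter : (⋂ n : ℕ, {z : Fin d → ℝ | euclNorm z ≤ q + 1 / (n + 1)})
      = {z : Fin d → ℝ | euclNorm z ≤ q} := by
    ext z
    simp only [Set.mem_iInter, Set.mem_setOf_eq]
    constructor
    · intro h
      have htq : Filter.Tendsto (fun n : ℕ => q + 1 / ((n : ℝ) + 1)) Filter.atTop (nhds q) := by
        have := tendsto_one_div_add_atTop_nhds_zero_nat (𝕜 := ℝ)
        simpa using Filter.Tendsto.const_add q this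
      exact ge_of_tendsto' htq fun n => h n
    · intro h n
      have : (0:ℝ) < 1 / (n + 1) := by positivity
      linarith
  have hant : Antitone (fun n : ℕ => {z : Fin d → ℝ | euclNorm z ≤ q + 1 / (n + 1)}) := by
    intro n m hnm z hz
    simp only [Set.mem_setOf_eq] at hz ⊢
    have hc : ((n:ℝ) + 1) ≤ ((m:ℝ) + 1) := by exact_mod_cast Nat.succ_le_succ hnm
    have : (1:ℝ) / (m + 1) ≤ 1 / (n + 1) := by
      apply one_div_le_one_div_of_le (by positivity) hc
    linarith
  have htend := tendsto_measure_iInter_atTop (μ := stdGaussian d)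
    (fun n : ℕ => (measurableSet_chiBall (q + 1 / (n + 1))).nullMeasurableSet)
    hant ⟨0, measure_ne_top _ _⟩
  rw [hInter] at htend
  have hlim : ENNReal.ofReal p ≤ stdGaussian d {z : Fin d → ℝ | euclNorm z ≤ q} := by
    refine ge_of_tendsto htend (Filter.Eventually.of_forall fun n => ?_)
    exact ENNReal.ofReal_le_of_le_toReal (hCmem n).2
  exact (ENNReal.ofReal_le_iff_le_toReal (measure_ne_top _ _)).mp hlim

lemma chiQuantile_le {d : ℕ} {p t : ℝ}
    (ht : 0 ≤ t ∧ p ≤ (stdGaussian d {z | euclNorm z ≤ t}).toReal) :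
    chiQuantile d p ≤ t :=
  csInf_le ⟨0, fun x hx => hx.1⟩ ht

lemma gaussianReal_abs_eq_stdGaussian1 {μ : ℝ} :
    gaussianReal 0 1 {x : ℝ | |x| ≤ μ} = stdGaussian 1 {z : Fin 1 → ℝ | euclNorm z ≤ μ} := by
  have he1 : ∑ i : Fin 1, (fun _ : Fin 1 => (1:ℝ)) i ^ 2 = 1 := by simp
  have hmap := stdGaussian_map_dot (d := 1) (by norm_num) (fun _ => (1:ℝ)) he1
  have hset : {z : Fin 1 → ℝ | euclNorm z ≤ μ}
      = (fun z : Fin 1 → ℝ => z ⬝ᵥ (fun _ => (1:ℝ))) ⁻¹' {x : ℝ | |x| ≤ μ} := by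
    ext z
    have h1 : euclNorm z = |z 0| := by
      rw [euclNorm, Fin.sum_univ_one, Real.sqrt_sq_eq_abs]
    have h2 : z ⬝ᵥ (fun _ => (1:ℝ)) = z 0 := by
      simp [dotProduct]
    simp [h1, h2]
  rw [hset, ← Measure.map_apply (measurable_dot _) (measurableSet_le measurable_abs
    measurable_const), hmap]


/-- Lemma 8(i): `χ₁⁻¹(p) ≤ μ(p, Y; N_Σ, Σ) ≤ χ_d⁻¹(p)`. -/
theorem stmt16 {d m K : ℕ} (hd : 1 ≤ d) (hm : 1 ≤ m) (hK : 1 ≤ K)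
    (v : Fin K → (Fin m → ℝ) → (Fin d → ℝ))
    (p : ℝ) (hp0 : 0 < p) (hp1 : p < 1)
    (Sg : Matrix (Fin d) (Fin d) ℝ) (hSg : Sg.PosDef)
    (Y : Set (Fin m → ℝ)) (hYne : Y.Nonempty)
    (hv : ∃ y ∈ Y, ∃ k, v k y ≠ 0) :
    ENNReal.ofReal (chiQuantile 1 p) ≤ muB v p Y (gaussOf Sg) Sg ∧
      muB v p Y (gaussOf Sg) Sg ≤ ENNReal.ofReal (chiQuantile d p) := by
  have hd0 : 0 < d := hd
  set A := matSqrt Sg with hA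
  have hmA : Measurable (fun z : Fin d → ℝ => A *ᵥ z) := measurable_mulVec A
  have hdet := matSqrt_det_isUnit hSg
  have rk_eq : ∀ (k : Fin K) (y : Fin m → ℝ), rk v k y Sg = euclNorm (A *ᵥ v k y) := by
    intro k y
    exact sSup_dot_USet hSg (v k y)
  constructor
  · -- lower bound
    refine le_iInf₂ fun μ hμ => ?_
    refine ENNReal.ofReal_le_ofReal ?_
    obtain ⟨hμ0, hμp⟩ := hμ
    obtain ⟨y, hy, k, hw⟩ := hv
    set w := v k y with hwdef
    have haw : A *ᵥ w ≠ 0 := by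
      intro h0
      apply hw
      have : A⁻¹ *ᵥ (A *ᵥ w) = w := by
        rw [Matrix.mulVec_mulVec, Matrix.nonsing_inv_mul _ hdet, Matrix.one_mulVec]
      rw [h0, Matrix.mulVec_zero] at this
      exact this.symm
    set σ := euclNorm (A *ᵥ w) with hσ
    have hσpos : 0 < σ := by
      rcases eq_or_lt_of_le (euclNorm_nonneg (A *ᵥ w)) with h0 | h
      · exact absurd (euclNorm_eq_zero_iff.mp h0.symm) haw
      · exact h
    have hslab : SErr v μ Y Sg ⊆ {Δ : Fin d → ℝ | |Δ ⬝ᵥ w| ≤ μ * σ} := by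
      intro Δ hΔ
      have := hΔ k y hy
      rwa [rk_eq k y, ← hσ] at this
    have hslab_meas : MeasurableSet {Δ : Fin d → ℝ | |Δ ⬝ᵥ w| ≤ μ * σ} :=
      measurableSet_le (measurable_dot w).abs measurable_const
    have step1 : ENNReal.ofReal p ≤ gaussOf Sg {Δ : Fin d → ℝ | |Δ ⬝ᵥ w| ≤ μ * σ} :=
      hμp.trans (measure_mono hslab)
    have step2 : gaussOf Sg {Δ : Fin d → ℝ | |Δ ⬝ᵥ w| ≤ μ * σ}
        = stdGaussian d {z : Fin d → ℝ | |z ⬝ᵥ (A *ᵥ w)| ≤ μ * σ} := by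
      rw [gaussOf, Measure.map_apply hmA hslab_meas]
      congr 1
      ext z
      simp only [Set.mem_preimage, Set.mem_setOf_eq]
      rw [mulVec_dot_symm hSg]
    set e : Fin d → ℝ := σ⁻¹ • (A *ᵥ w) with he_def
    have he : ∑ i, e i ^ 2 = 1 := by
      have h1 : ∑ i, (A *ᵥ w) i ^ 2 = σ ^ 2 := by
        rw [hσ, euclNorm, Real.sq_sqrt (by positivity)]
      have : ∑ i, e i ^ 2 = σ⁻¹ ^ 2 * ∑ i, (A *ᵥ w) i ^ 2 := by
        rw [Finset.mul_sum]
        refine Finset.sum_congr rfl fun i _ => ?_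
        rw [he_def]
        simp [Pi.smul_apply, smul_eq_mul, mul_pow]
      rw [this, h1]
      field_simp
    have hsete : {z : Fin d → ℝ | |z ⬝ᵥ (A *ᵥ w)| ≤ μ * σ}
        = (fun z : Fin d → ℝ => z ⬝ᵥ e) ⁻¹' {x : ℝ | |x| ≤ μ} := by
      ext z
      simp only [Set.mem_setOf_eq, Set.mem_preimage]
      have hze : z ⬝ᵥ e = σ⁻¹ * (z ⬝ᵥ (A *ᵥ w)) := by
        rw [he_def, dotProduct_smul, smul_eq_mul]
      rw [hze, abs_mul, abs_inv, abs_of_pos hσpos]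
      rw [inv_mul_le_iff₀ hσpos]
      constructor
      · intro h; linarith
      · intro h; linarith
    have step3 : stdGaussian d {z : Fin d → ℝ | |z ⬝ᵥ (A *ᵥ w)| ≤ μ * σ}
        = gaussianReal 0 1 {x : ℝ | |x| ≤ μ} := by
      rw [hsete, ← Measure.map_apply (measurable_dot e)
        (measurableSet_le measurable_abs measurable_const),
        stdGaussian_map_dot hd0 e he]
    have hfinal : ENNReal.ofReal p ≤ stdGaussian 1 {z : Fin 1 → ℝ | euclNorm z ≤ μ} := by
      rw [← gaussianReal_abs_eq_stdGaussian1, ← step3, ← step2]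
      exact step1
    refine chiQuantile_le ⟨hμ0, ?_⟩
    exact (ENNReal.ofReal_le_iff_le_toReal (measure_ne_top _ _)).mp hfinal
  · -- upper bound
    obtain ⟨hq0, hqp⟩ := chiQuantile_mem (d := d) hp0 hp1
    set μd := chiQuantile d p with hμd
    have hsub : {z : Fin d → ℝ | euclNorm z ≤ μd}
        ⊆ (fun z : Fin d → ℝ => A *ᵥ z) ⁻¹' SErr v μd Y Sg := by
      intro z hz
      simp only [Set.mem_setOf_eq] at hz
      intro k y hy
      rw [mulVec_dot_symm hSg, rk_eq k y]
      calc |z ⬝ᵥ (A *ᵥ v k y)| ≤ euclNorm z * euclNorm (A *ᵥ v k y) := abs_dotProduct_le _ _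
        _ ≤ μd * euclNorm (A *ᵥ v k y) :=
          mul_le_mul_of_nonneg_right hz (euclNorm_nonneg _)
    have hP : ENNReal.ofReal p ≤ gaussOf Sg (SErr v μd Y Sg) := by
      calc ENNReal.ofReal p ≤ stdGaussian d {z : Fin d → ℝ | euclNorm z ≤ μd} :=
            ENNReal.ofReal_le_of_le_toReal hqp
        _ ≤ stdGaussian d ((fun z : Fin d → ℝ => A *ᵥ z) ⁻¹' SErr v μd Y Sg) :=
            measure_mono hsub
        _ ≤ gaussOf Sg (SErr v μd Y Sg) := Measure.le_map_apply hmA.aemeasurable _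
    exact iInf₂_le μd ⟨hq0, hP⟩
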